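/- Let G be a simple connected graph with n ≥ 2 vertices and m edges, and write a_k = d(G,k). Then the Harary index of the Mycielskian of G is Har(μ(G)) = (1/24)(17n² + 31n + 50m + 14a_2 + 2a_3). -/

import Mathlib

open SimpleGraph Polynomial Finset

/-- The Mycielskian `μ(G)` of a simple graph `G`. Vertices `Sum.inl v` are the original
vertices `v_i`, vertices `Sum.inr (Sum.inl v)` are the shadow vertices `u_i`, and
`Sum.inr (Sum.inr ())` is the apex vertex `w`.  Edges: the edges of `G`, the edges `w u_i`,
and the edges `u_i v_j`, `u_j v_i` for every edge `v_i v_j` of `G`. -/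
def mycielskian {V : Type*} (G : SimpleGraph V) : SimpleGraph (V ⊕ V ⊕ Unit) :=
  SimpleGraph.fromRel (fun a b =>
    match a, b with
    | Sum.inl a, Sum.inl b => G.Adj a b
    | Sum.inl a, Sum.inr (Sum.inl b) => G.Adj a b
    | Sum.inr (Sum.inl _), Sum.inr (Sum.inr _) => True
    | _, _ => False)

/-- `distCount G k` is `d(G,k)`, the number of unordered pairs of distinct vertices of `G`
whose graph distance is exactly `k`. -/
noncomputable def distCount {V : Type*} (G : SimpleGraph V) (k : ℕ) : ℕ :=
  Nat.card {e : Sym2 V // ¬ e.IsDiag ∧ Sym2.lift ⟨G.dist, fun _ _ => G.dist_comm⟩ e = k}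

/-- The Hosoya polynomial `H(G,x) = Σ_{k=1}^{D(G)} d(G,k) x^k` (with rational coefficients). -/
noncomputable def hosoya {V : Type*} (G : SimpleGraph V) : Polynomial ℚ :=
  ∑ k ∈ Finset.Icc 1 G.diam, (distCount G k : ℚ) • Polynomial.X ^ k

/-- The Wiener index `W(G)`: the sum of distances over all unordered pairs of distinct
vertices (the diagonal contributes `0`, so we may sum over ordered pairs and halve). -/
noncomputable def wiener {V : Type*} (G : SimpleGraph V) [Fintype V] : ℚ :=
  (∑ u : V, ∑ v : V, (G.dist u v : ℚ)) / 2

/-- The Hyper-Wiener index `WW(G) = (1/2) Σ_{{u,v}} (d(u,v)² + d(u,v))`. -/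
noncomputable def hyperWiener {V : Type*} (G : SimpleGraph V) [Fintype V] : ℚ :=
  (∑ u : V, ∑ v : V, ((G.dist u v : ℚ) ^ 2 + (G.dist u v : ℚ))) / 4

/-- The TSZ index `TSZ(G) = (1/6) Σ_{{u,v}} d³ + (1/2) Σ_{{u,v}} d² + (1/3) Σ_{{u,v}} d`. -/
noncomputable def tszIndex {V : Type*} (G : SimpleGraph V) [Fintype V] : ℚ :=
  (∑ u : V, ∑ v : V, (G.dist u v : ℚ) ^ 3) / 12
    + (∑ u : V, ∑ v : V, (G.dist u v : ℚ) ^ 2) / 4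
    + (∑ u : V, ∑ v : V, (G.dist u v : ℚ)) / 6

/-- The Harary index `Har(G) = Σ_{{u,v}} 1/d(u,v)` (diagonal terms are `0⁻¹ = 0`). -/
noncomputable def harary {V : Type*} (G : SimpleGraph V) [Fintype V] : ℚ :=
  (∑ u : V, ∑ v : V, ((G.dist u v : ℚ))⁻¹) / 2

/-- The closeness `C(G) = Σ_u Σ_{v ≠ u} 2^{-d(u,v)}` over ordered pairs of distinct vertices. -/
noncomputable def closeness {V : Type*} (G : SimpleGraph V) [Fintype V] : ℚ :=
  letI := Classical.decEq V
  ∑ u : V, ∑ v : V, if v = u then 0 else ((1 : ℚ) / 2) ^ (G.dist u v)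

/-- `σ_{uv}`: the number of shortest paths (walks of length `dist u v`) from `u` to `v`. -/
noncomputable def numSP {V : Type*} (G : SimpleGraph V) (u v : V) : ℕ :=
  Nat.card {p : G.Walk u v // p.length = G.dist u v}

/-- `σ_{uv}(w)`: the number of shortest paths from `u` to `v` passing through `w`. -/
noncomputable def numSPthrough {V : Type*} (G : SimpleGraph V) (w u v : V) : ℕ :=
  Nat.card {p : G.Walk u v // p.length = G.dist u v ∧ w ∈ p.support}

/-- The betweenness centrality `B_w = Σ_{{u,v}, u ≠ w ≠ v} σ_{uv}(w)/σ_{uv}` of a vertex `w`,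
summed over unordered pairs of distinct vertices (ordered pairs, halved). -/
noncomputable def btwVertex {V : Type*} (G : SimpleGraph V) [Fintype V] (w : V) : ℚ :=
  letI := Classical.decEq V
  (∑ u : V, ∑ v : V,
    if u ≠ v ∧ u ≠ w ∧ v ≠ w then (numSPthrough G w u v : ℚ) / (numSP G u v) else 0) / 2

/-- The betweenness centrality of a graph: `B⁻(G) = (1/N) Σ_w B_w`. -/
noncomputable def btw {V : Type*} (G : SimpleGraph V) [Fintype V] : ℚ :=
  (∑ w : V, btwVertex G w) / (Fintype.card V)

/-- The star graph `S_n`: center `0` joined to the `n` leaves `1, …, n`. -/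
def starGraph (n : ℕ) : SimpleGraph (Fin (n + 1)) :=
  SimpleGraph.fromRel (fun a _ => a = 0)

/-- The join `G₁ ⊕ G₂` of two graphs on disjoint vertex sets: all edges of `G₁`, all edges
of `G₂`, and all edges between `V(G₁)` and `V(G₂)`. -/
def joinGraph {V₁ V₂ : Type*} (G₁ : SimpleGraph V₁) (G₂ : SimpleGraph V₂) :
    SimpleGraph (V₁ ⊕ V₂) :=
  SimpleGraph.fromRel (fun a b =>
    match a, b with
    | Sum.inl a, Sum.inl b => G₁.Adj a b
    | Sum.inr a, Sum.inr b => G₂.Adj a b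
    | Sum.inl _, Sum.inr _ => True
    | _, _ => False)

namespace MyAux

variable {V : Type*} {G : SimpleGraph V}

@[simp] lemma adj_LL {i j : V} : (mycielskian G).Adj (Sum.inl i) (Sum.inl j) ↔ G.Adj i j := by
  simp only [mycielskian, fromRel_adj]
  constructor
  · rintro ⟨-, h | h⟩
    · exact h
    · exact h.symm
  · intro h
    exact ⟨by simp [h.ne], Or.inl h⟩

@[simp] lemma adj_LU {i j : V} :
    (mycielskian G).Adj (Sum.inl i) (Sum.inr (Sum.inl j)) ↔ G.Adj i j := by
  simp only [mycielskian, fromRel_adj]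
  constructor
  · rintro ⟨-, h | h⟩
    · exact h
    · exact h.elim
  · intro h
    exact ⟨by simp, Or.inl h⟩

@[simp] lemma adj_UL {i j : V} :
    (mycielskian G).Adj (Sum.inr (Sum.inl i)) (Sum.inl j) ↔ G.Adj j i := by
  constructor
  · intro h; exact adj_LU.mp h.symm
  · intro h; exact (adj_LU.mpr h).symm

@[simp] lemma adj_UW {i : V} {u : Unit} :
    (mycielskian G).Adj (Sum.inr (Sum.inl i)) (Sum.inr (Sum.inr u)) := by
  simp only [mycielskian, fromRel_adj]
  exact ⟨by simp, Or.inl trivial⟩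

@[simp] lemma adj_WU {i : V} {u : Unit} :
    (mycielskian G).Adj (Sum.inr (Sum.inr u)) (Sum.inr (Sum.inl i)) := adj_UW.symm

@[simp] lemma adj_LW {i : V} {u : Unit} :
    ¬ (mycielskian G).Adj (Sum.inl i) (Sum.inr (Sum.inr u)) := by
  simp only [mycielskian, fromRel_adj]
  rintro ⟨-, h | h⟩ <;> exact h

@[simp] lemma adj_UU {i j : V} :
    ¬ (mycielskian G).Adj (Sum.inr (Sum.inl i)) (Sum.inr (Sum.inl j)) := by
  simp only [mycielskian, fromRel_adj]
  rintro ⟨-, h | h⟩ <;> exact h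

@[simp] lemma adj_WW {u u' : Unit} :
    ¬ (mycielskian G).Adj (Sum.inr (Sum.inr u)) (Sum.inr (Sum.inr u')) := by
  simp only [mycielskian, fromRel_adj]
  rintro ⟨-, h | h⟩ <;> exact h

/-- The target distance function on the Mycielskian. -/
noncomputable def D (G : SimpleGraph V) : (V ⊕ V ⊕ Unit) → (V ⊕ V ⊕ Unit) → ℕ
  | Sum.inl i, Sum.inl j => min (G.dist i j) 4
  | Sum.inl i, Sum.inr (Sum.inl j) => if G.dist i j = 0 then 2 else min (G.dist i j) 3
  | Sum.inr (Sum.inl i), Sum.inl j => if G.dist i j = 0 then 2 else min (G.dist i j) 3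
  | Sum.inr (Sum.inl i), Sum.inr (Sum.inl j) => if G.dist i j = 0 then 0 else 2
  | Sum.inl _, Sum.inr (Sum.inr _) => 2
  | Sum.inr (Sum.inr _), Sum.inl _ => 2
  | Sum.inr (Sum.inl _), Sum.inr (Sum.inr _) => 1
  | Sum.inr (Sum.inr _), Sum.inr (Sum.inl _) => 1
  | Sum.inr (Sum.inr _), Sum.inr (Sum.inr _) => 0


@[simp] lemma adj_WL {i : V} {u : Unit} :
    ¬ (mycielskian G).Adj (Sum.inr (Sum.inr u)) (Sum.inl i) :=
  fun h => adj_LW h.symm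

variable (G) in
lemma exists_adj (hc : G.Connected) [Fintype V] (h2 : 1 < Fintype.card V) (i : V) :
    ∃ a, G.Adj i a := by
  obtain ⟨j, hj⟩ := Fintype.exists_ne_of_one_lt_card h2 i
  obtain ⟨p, hp⟩ := (hc i j).exists_walk_length_eq_dist
  cases p with
  | nil => exact absurd hj.symm (by simp)
  | cons h q => exact ⟨_, h⟩

lemma dist_adj {i j : V} (h : G.Adj i j) : G.dist i j = 1 := dist_eq_one_iff_adj.mpr h

lemma tri (hc : G.Connected) {i i' : V} (h : G.Adj i i') (j : V) :
    G.dist i j ≤ G.dist i' j + 1 := by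
  calc G.dist i j ≤ G.dist i i' + G.dist i' j := hc.dist_triangle
  _ = G.dist i' j + 1 := by rw [dist_adj h]; ring

lemma D_step (hc : G.Connected) {x x' : V ⊕ V ⊕ Unit}
    (h : (mycielskian G).Adj x x') (y : V ⊕ V ⊕ Unit) : D G x y ≤ D G x' y + 1 := by
  obtain (i | i | u) := x <;> obtain (i' | i' | u') := x' <;>
    simp only [adj_LL, adj_LU, adj_UL, adj_LW, adj_UL, adj_UU, adj_WL, adj_WW, adj_UW, adj_WU] at h
  -- x = L i, x' = L i', h : G.Adj i i'
  · obtain (j | j | uj) := y <;> simp only [D]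
    · have h1 := tri hc h j
      omega
    · have h1 := tri hc h j
      have h3 := tri hc h.symm j
      have h2 := dist_adj h
      split_ifs <;> omega
    · omega
  -- x = L i, x' = U i', h : G.Adj i i'
  · obtain (j | j | uj) := y <;> simp only [D]
    · have h1 := tri hc h j
      have h2 := dist_adj h
      split_ifs <;> omega
    · have h1 := tri hc h j
      have h2 := dist_adj h
      split_ifs with hz hz2 hz2
      · exfalso
        have e1 : i = j := hc.dist_eq_zero_iff.mp hz
        have e2 : i' = j := hc.dist_eq_zero_iff.mp hz2
        subst e1; subst e2
        simp [SimpleGraph.dist_self] at h2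
      · omega
      · omega
      · omega
    · omega
  -- x = U i, x' = L i', h : G.Adj i' i
  · obtain (j | j | uj) := y <;> simp only [D]
    · have h1 := tri hc h.symm j
      split_ifs with hz
      · have e1 : i = j := hc.dist_eq_zero_iff.mp hz
        subst e1
        have h2 := dist_adj h
        omega
      · omega
    · split_ifs <;> omega
    · omega
  -- x = U i, x' = W
  · obtain (j | j | uj) := y <;> simp only [D]
    · split_ifs <;> omega
    · split_ifs <;> omega
    · omega
  -- x = W, x' = U i'
  · obtain (j | j | uj) := y <;> simp only [D]
    · split_ifs <;> omega
    · split_ifs <;> omega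
    · omega

lemma D_refl (x : V ⊕ V ⊕ Unit) : D G x x = 0 := by
  obtain (i | i | u) := x <;> simp [D, SimpleGraph.dist_self]

lemma D_le_length (hc : G.Connected) :
    ∀ {x y : V ⊕ V ⊕ Unit} (p : (mycielskian G).Walk x y), D G x y ≤ p.length := by
  intro x y p
  induction p with
  | nil => simp [D_refl]
  | cons h q ih =>
    calc D G _ _ ≤ D G _ _ + 1 := D_step hc h _
    _ ≤ q.length + 1 := by omega
    _ = _ := by simp [SimpleGraph.Walk.length_cons]


/-- The natural embedding of `G` into its Mycielskian. -/
def homL (G : SimpleGraph V) : G →g mycielskian G := ⟨Sum.inl, fun h => adj_LL.mpr h⟩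

lemma dist2 {x y z : V ⊕ V ⊕ Unit} (h1 : (mycielskian G).Adj x y)
    (h2 : (mycielskian G).Adj y z) : (mycielskian G).dist x z ≤ 2 := by
  have := SimpleGraph.dist_le (Walk.cons h1 (Walk.cons h2 Walk.nil))
  simpa using this

lemma dist3 {x y z w : V ⊕ V ⊕ Unit} (h1 : (mycielskian G).Adj x y)
    (h2 : (mycielskian G).Adj y z) (h3 : (mycielskian G).Adj z w) :
    (mycielskian G).dist x w ≤ 3 := by
  have := SimpleGraph.dist_le (Walk.cons h1 (Walk.cons h2 (Walk.cons h3 Walk.nil)))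
  simpa using this

lemma dist4 {x y z w v : V ⊕ V ⊕ Unit} (h1 : (mycielskian G).Adj x y)
    (h2 : (mycielskian G).Adj y z) (h3 : (mycielskian G).Adj z w)
    (h4 : (mycielskian G).Adj w v) : (mycielskian G).dist x v ≤ 4 := by
  have := SimpleGraph.dist_le (Walk.cons h1 (Walk.cons h2 (Walk.cons h3 (Walk.cons h4 Walk.nil))))
  simpa using this

lemma distLL (hc : G.Connected) (i j : V) :
    (mycielskian G).dist (Sum.inl i) (Sum.inl j) ≤ G.dist i j := by
  obtain ⟨p, hp⟩ := (hc i j).exists_walk_length_eq_dist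
  calc (mycielskian G).dist (Sum.inl i) (Sum.inl j) ≤ (p.map (homL G)).length :=
        SimpleGraph.dist_le _
  _ = G.dist i j := by rw [Walk.length_map, hp]

lemma distUL (hc : G.Connected) {i j : V} (hij : G.dist i j ≠ 0) :
    (mycielskian G).dist (Sum.inr (Sum.inl i)) (Sum.inl j) ≤ G.dist i j := by
  obtain ⟨p, hp⟩ := (hc i j).exists_walk_length_eq_dist
  cases p with
  | nil => simp only [Walk.length_nil] at hp; exact absurd hp.symm hij
  | cons h q =>
    calc (mycielskian G).dist (Sum.inr (Sum.inl i)) (Sum.inl j)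
        ≤ (Walk.cons (adj_UL.mpr h.symm) (q.map (homL G))).length := SimpleGraph.dist_le _
    _ = G.dist i j := by
      rw [← hp]
      show (q.map (homL G)).length + 1 = (Walk.cons h q).length
      rw [Walk.length_map, Walk.length_cons]

variable [Fintype V]

lemma myc_reachable (hc : G.Connected) (h2 : 1 < Fintype.card V) (x : V ⊕ V ⊕ Unit) :
    (mycielskian G).Reachable x (Sum.inr (Sum.inr ())) := by
  obtain (i | i | u) := x
  · obtain ⟨a, ha⟩ := exists_adj G hc h2 i
    exact ⟨Walk.cons (adj_LU.mpr ha) (Walk.cons adj_UW Walk.nil)⟩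
  · exact ⟨Walk.cons adj_UW Walk.nil⟩
  · rfl

lemma dist_myc (hc : G.Connected) (h2 : 1 < Fintype.card V) (x y : V ⊕ V ⊕ Unit) :
    (mycielskian G).dist x y = D G x y := by
  refine le_antisymm ?_ ?_
  · obtain (i | i | u) := x <;> obtain (j | j | uj) := y <;> simp only [D]
    · -- L L
      refine le_min (distLL hc i j) ?_
      obtain ⟨a, ha⟩ := exists_adj G hc h2 i
      obtain ⟨b, hb⟩ := exists_adj G hc h2 j
      exact dist4 (adj_LU.mpr ha) (adj_UW (u := ())) adj_WU (adj_UL.mpr hb)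
    · -- L U
      rw [SimpleGraph.dist_comm]
      split_ifs with hz
      · -- i = j
        have e : i = j := hc.dist_eq_zero_iff.mp hz
        subst e
        obtain ⟨a, ha⟩ := exists_adj G hc h2 i
        exact dist2 (adj_UL.mpr ha.symm) (adj_LL.mpr ha.symm)
      · refine le_min ?_ ?_
        · rw [G.dist_comm] at hz ⊢
          exact distUL hc hz
        · obtain ⟨b, hb⟩ := exists_adj G hc h2 i
          exact dist3 (adj_UW (u := ())) adj_WU (adj_UL.mpr hb)
    · -- L W
      obtain ⟨a, ha⟩ := exists_adj G hc h2 i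
      cases uj
      exact dist2 (adj_LU.mpr ha) adj_UW
    · -- U L
      split_ifs with hz
      · have e : i = j := hc.dist_eq_zero_iff.mp hz
        subst e
        obtain ⟨a, ha⟩ := exists_adj G hc h2 i
        exact dist2 (adj_UL.mpr ha.symm) (adj_LL.mpr ha.symm)
      · refine le_min (distUL hc hz) ?_
        obtain ⟨b, hb⟩ := exists_adj G hc h2 j
        exact dist3 (adj_UW (u := ())) adj_WU (adj_UL.mpr hb)
    · -- U U
      split_ifs with hz
      · have e : i = j := hc.dist_eq_zero_iff.mp hz
        subst e
        simp [SimpleGraph.dist_self]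
      · exact dist2 (adj_UW (u := ())) adj_WU
    · -- U W
      cases uj
      exact SimpleGraph.dist_le (Walk.cons adj_UW Walk.nil)
    · -- W L
      cases u
      obtain ⟨a, ha⟩ := exists_adj G hc h2 j
      exact dist2 adj_WU (adj_UL.mpr ha)
    · -- W U
      cases u
      exact SimpleGraph.dist_le (Walk.cons adj_WU Walk.nil)
    · -- W W
      cases u; cases uj
      simp [SimpleGraph.dist_self]
  · obtain ⟨p, hp⟩ :=
      ((myc_reachable hc h2 x).trans (myc_reachable hc h2 y).symm).exists_walk_length_eq_dist
    rw [← hp]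
    exact D_le_length hc p



section counting

lemma pt_ll (d : ℕ) : ((min d 4 : ℕ) : ℚ)⁻¹ =
    (if d = 1 then (3/4:ℚ) else 0) + (if d = 2 then (1/4:ℚ) else 0)
      + (if d = 3 then (1/12:ℚ) else 0) + (if d ≠ 0 then (1/4:ℚ) else 0) := by
  rcases d with _|_|_|_|d <;> norm_num
  rw [if_neg (by omega), if_neg (by omega)]
  norm_num

lemma pt_mix (d : ℕ) : (((if d = 0 then 2 else min d 3 : ℕ)) : ℚ)⁻¹ =
    (if d = 0 then (1/2:ℚ) else 0) + (if d = 1 then (2/3:ℚ) else 0)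
      + (if d = 2 then (1/6:ℚ) else 0) + (if d ≠ 0 then (1/3:ℚ) else 0) := by
  rcases d with _|_|_|d <;> norm_num
  omega

lemma pt_uu (d : ℕ) : (((if d = 0 then 0 else 2 : ℕ)) : ℚ)⁻¹ =
    (if d ≠ 0 then (1/2:ℚ) else 0) := by
  rcases d with _|d <;> norm_num

variable (G) [Fintype V]

lemma card_diag (hc : G.Connected) :
    #(univ.filter fun p : V × V => G.dist p.1 p.2 = 0) = Fintype.card V := by
  classical
  have : (univ.filter fun p : V × V => G.dist p.1 p.2 = 0) = Finset.diag univ := by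
    ext ⟨a, b⟩
    simp [Finset.mem_diag, hc.dist_eq_zero_iff]
  rw [this, Finset.diag_card, Finset.card_univ]

lemma card_ne_diag (hc : G.Connected) :
    #(univ.filter fun p : V × V => ¬ (G.dist p.1 p.2 = 0))
      = Fintype.card V * Fintype.card V - Fintype.card V := by
  have h := Finset.card_filter_add_card_filter_not
    (s := (univ : Finset (V × V))) (p := fun p : V × V => G.dist p.1 p.2 = 0)
  rw [card_diag G hc] at h
  have : Fintype.card (V × V) = Fintype.card V * Fintype.card V := Fintype.card_prod V V
  rw [Finset.card_univ, this] at h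
  omega

lemma card_dist_one {m : ℕ} (hm : Nat.card G.edgeSet = m) :
    #(univ.filter fun p : V × V => G.dist p.1 p.2 = 1) = 2 * m := by
  classical
  have h1 : (univ.filter fun p : V × V => G.dist p.1 p.2 = 1)
      = (univ.filter fun p : V × V => G.Adj p.1 p.2) := by
    ext ⟨a, b⟩
    simp
  have h2 : 2 * #G.edgeFinset = #(univ.filter fun p : V × V => G.Adj p.1 p.2) := by
    rw [SimpleGraph.two_mul_card_edgeFinset]
  have h3 : #G.edgeFinset = m := by
    rw [← hm, Nat.card_eq_fintype_card, SimpleGraph.edgeFinset, Set.toFinset_card]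
  rw [h1, ← h2, h3]

lemma card_dist_k (k : ℕ) (hk : k ≠ 0) :
    #(univ.filter fun p : V × V => G.dist p.1 p.2 = k) = 2 * distCount G k := by
  classical
  have e1 : distCount G k
      = #(univ.filter fun e : Sym2 V =>
          Sym2.lift ⟨G.dist, fun _ _ => G.dist_comm⟩ e = k) := by
    rw [distCount, Nat.card_eq_fintype_card, Fintype.card_subtype]
    congr 1
    ext e
    induction e with
    | _ a b =>
      simp only [Finset.mem_filter, Finset.mem_univ, true_and,
        Sym2.isDiag_iff_proj_eq, Sym2.lift_mk]
      constructor
      · rintro ⟨-, h⟩; exact h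
      · intro h
        refine ⟨fun hd => hk ?_, h⟩
        subst hd
        rw [← h, SimpleGraph.dist_self]
  have key := Finset.card_eq_sum_card_fiberwise
    (f := fun p : V × V => s(p.1, p.2))
    (s := univ.filter fun p : V × V => G.dist p.1 p.2 = k)
    (t := univ.filter fun e : Sym2 V =>
        Sym2.lift ⟨G.dist, fun _ _ => G.dist_comm⟩ e = k)
    (fun p hp => by
      simp only [Finset.coe_filter, Finset.mem_univ, true_and, Set.mem_setOf_eq] at hp ⊢
      exact hp)
  rw [key, e1]
  rw [Finset.sum_congr rfl (g := fun _ => 2) ?_, Finset.sum_const, smul_eq_mul, mul_comm]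
  intro e he
  induction e with
  | _ a b =>
    simp only [Finset.mem_filter, Finset.mem_univ, true_and, Sym2.lift_mk] at he
    have hab : a ≠ b := by
      rintro rfl
      rw [SimpleGraph.dist_self] at he
      exact hk he.symm
    have hfib : ((univ.filter fun p : V × V => G.dist p.1 p.2 = k).filter
        fun p : V × V => s(p.1, p.2) = s(a, b)) = {(a, b), (b, a)} := by
      ext ⟨c, d⟩
      simp only [Finset.mem_filter, Finset.mem_univ, true_and, Finset.mem_insert,
        Finset.mem_singleton, Prod.mk.injEq, Sym2.eq_iff]
      constructor
      · rintro ⟨-, (⟨rfl, rfl⟩ | ⟨rfl, rfl⟩)⟩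
        · exact Or.inl ⟨rfl, rfl⟩
        · exact Or.inr ⟨rfl, rfl⟩
      · rintro (⟨rfl, rfl⟩ | ⟨rfl, rfl⟩)
        · exact ⟨he, Or.inl ⟨rfl, rfl⟩⟩
        · exact ⟨by rwa [G.dist_comm], Or.inr ⟨rfl, rfl⟩⟩
    rw [hfib, Finset.card_pair]
    simp only [ne_eq, Prod.mk.injEq, not_and]
    intro h; exact absurd h hab


lemma sum_ite_P (P : V × V → Prop) [DecidablePred P] (c : ℚ) :
    ∑ p : V × V, (if P p then c else 0) = #(univ.filter P) * c := by
  rw [← Finset.sum_filter, Finset.sum_const, nsmul_eq_mul]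

end counting


lemma block_sum [Fintype V] (f : ℕ → ℚ) (c00 c1 c2 c3 c0 : ℚ)
    (hf : ∀ d : ℕ, f d = (if d = 0 then c00 else 0) + (if d = 1 then c1 else 0)
      + (if d = 2 then c2 else 0) + (if d = 3 then c3 else 0) + (if d ≠ 0 then c0 else 0)) :
    ∑ x : V, ∑ y : V, f (G.dist x y)
      = #(univ.filter fun p : V × V => G.dist p.1 p.2 = 0) * c00
        + #(univ.filter fun p : V × V => G.dist p.1 p.2 = 1) * c1
        + #(univ.filter fun p : V × V => G.dist p.1 p.2 = 2) * c2
        + #(univ.filter fun p : V × V => G.dist p.1 p.2 = 3) * c3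
        + #(univ.filter fun p : V × V => G.dist p.1 p.2 ≠ 0) * c0 := by
  classical
  rw [← Finset.sum_product', Finset.univ_product_univ]
  rw [Finset.sum_congr rfl (fun p _ => hf (G.dist p.1 p.2))]
  simp only [Finset.sum_add_distrib]
  rw [sum_ite_P (fun p : V × V => G.dist p.1 p.2 = 0),
    sum_ite_P (fun p : V × V => G.dist p.1 p.2 = 1),
    sum_ite_P (fun p : V × V => G.dist p.1 p.2 = 2),
    sum_ite_P (fun p : V × V => G.dist p.1 p.2 = 3),
    sum_ite_P (fun p : V × V => G.dist p.1 p.2 ≠ 0)]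

end MyAux

open MyAux in
/-- For a connected graph `G` with `n ≥ 2` vertices and `m` edges, with
`a_k = d(G,k)`, the Harary index of `μ(G)` is `(1/24)(17n² + 31n + 50m + 14a₂ + 2a₃)`. -/
theorem stmt_11 {V : Type*} [Fintype V] (G : SimpleGraph V) (n m : ℕ)
    (hn : Fintype.card V = n) (hn2 : 2 ≤ n) (hm : Nat.card G.edgeSet = m)
    (hc : G.Connected) :
    harary (mycielskian G) =
      (17 * (n : ℚ) ^ 2 + 31 * n + 50 * m + 14 * distCount G 2 + 2 * distCount G 3) / 24 := by
    classical
  subst hn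
  have h2 : 1 < Fintype.card V := by omega
  have hLL : (∑ x : V, ∑ y : V, ((G.dist x y ⊓ 4 : ℕ) : ℚ)⁻¹)
      = #(univ.filter fun p : V × V => G.dist p.1 p.2 = 0) * 0
        + #(univ.filter fun p : V × V => G.dist p.1 p.2 = 1) * (3/4)
        + #(univ.filter fun p : V × V => G.dist p.1 p.2 = 2) * (1/4)
        + #(univ.filter fun p : V × V => G.dist p.1 p.2 = 3) * (1/12)
        + #(univ.filter fun p : V × V => G.dist p.1 p.2 ≠ 0) * (1/4) :=
    block_sum (fun d => ((d ⊓ 4 : ℕ) : ℚ)⁻¹) 0 (3/4) (1/4) (1/12) (1/4)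
      (fun d => by beta_reduce; rw [pt_ll d]; split_ifs <;> ring)
  have hMix : (∑ x : V, ∑ y : V, (((if G.dist x y = 0 then 2 else G.dist x y ⊓ 3 : ℕ)) : ℚ)⁻¹)
      = #(univ.filter fun p : V × V => G.dist p.1 p.2 = 0) * (1/2)
        + #(univ.filter fun p : V × V => G.dist p.1 p.2 = 1) * (2/3)
        + #(univ.filter fun p : V × V => G.dist p.1 p.2 = 2) * (1/6)
        + #(univ.filter fun p : V × V => G.dist p.1 p.2 = 3) * 0
        + #(univ.filter fun p : V × V => G.dist p.1 p.2 ≠ 0) * (1/3) :=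
    block_sum (fun d => (((if d = 0 then 2 else d ⊓ 3 : ℕ)) : ℚ)⁻¹) (1/2) (2/3) (1/6) 0 (1/3)
      (fun d => by beta_reduce; rw [pt_mix d]; split_ifs <;> ring)
  have hUU : (∑ x : V, ∑ y : V, (((if G.dist x y = 0 then 0 else 2 : ℕ)) : ℚ)⁻¹)
      = #(univ.filter fun p : V × V => G.dist p.1 p.2 = 0) * 0
        + #(univ.filter fun p : V × V => G.dist p.1 p.2 = 1) * 0
        + #(univ.filter fun p : V × V => G.dist p.1 p.2 = 2) * 0
        + #(univ.filter fun p : V × V => G.dist p.1 p.2 = 3) * 0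
        + #(univ.filter fun p : V × V => G.dist p.1 p.2 ≠ 0) * (1/2) :=
    block_sum (fun d => (((if d = 0 then 0 else 2 : ℕ)) : ℚ)⁻¹) 0 0 0 0 (1/2)
      (fun d => by beta_reduce; rw [pt_uu d]; split_ifs <;> ring)
  rw [harary]
  simp only [dist_myc hc h2, Fintype.sum_sum_type, Finset.univ_unique, Finset.sum_singleton, D]
  simp only [Finset.sum_add_distrib, Finset.sum_const, Finset.card_univ]
  rw [hLL, hMix, hUU]
  rw [card_diag G hc, card_dist_one G hm, card_dist_k G 2 (by norm_num),
    card_dist_k G 3 (by norm_num), card_ne_diag G hc]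
  have hle : Fintype.card V ≤ Fintype.card V * Fintype.card V :=
    Nat.le_mul_of_pos_left _ (by omega)
  rw [Nat.cast_sub hle]
  push_cast
  field_simp
  ring
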